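/- arXiv:2412.12326 — 2 statements merged into one kernel-verified Lean document; each statement's English description precedes it below -/
import Mathlib

section
/- For two joint policies π_old and π_new over a Markov decision process with N agents, the collective return satisfies η(π_new) = η(π_old) + E_{τ∼π_new}[Σ_{i=1}^N Σ_{t=0}^∞ γ^t A_i^{π_old}(s_t, a_t)], where the expectation is over trajectories generated by π_new. -/
open scoped BigOperators

/-- Distribution over states at time `t` of the Markov chain induced by joint policy `π`,
transition kernel `P`, and initial state distribution `d0`. -/
noncomputable def stateDist {S A : Type*} [Fintype S] [Fintype A]
    (P : S → A → S → ℝ) (π : S → A → ℝ) (d0 : S → ℝ) : ℕ → S → ℝ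
  | 0 => d0
  | t + 1 => fun s' => ∑ s, ∑ a, stateDist P π d0 t s * π s a * P s a s'

/-- Expected reward received at time `t` along trajectories of the induced chain. -/
noncomputable def expRew {S A : Type*} [Fintype S] [Fintype A]
    (P : S → A → S → ℝ) (π : S → A → ℝ) (r : S → A → ℝ) (d0 : S → ℝ) (t : ℕ) : ℝ :=
  ∑ s, stateDist P π d0 t s * ∑ a, π s a * r s a

/-- State-value function: expected discounted return starting from state `s`. -/
noncomputable def Vval {S A : Type*} [Fintype S] [Fintype A] [DecidableEq S]
    (γ : ℝ) (P : S → A → S → ℝ) (π : S → A → ℝ) (r : S → A → ℝ) (s : S) : ℝ :=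
  ∑' t : ℕ, γ ^ t * expRew P π r (fun s' => if s' = s then 1 else 0) t

/-- Action-value function: expected discounted return with `s₀ = s`, `a₀ = a` fixed,
and subsequent actions chosen by `π`. -/
noncomputable def Qval {S A : Type*} [Fintype S] [Fintype A]
    (γ : ℝ) (P : S → A → S → ℝ) (π : S → A → ℝ) (r : S → A → ℝ) (s : S) (a : A) : ℝ :=
  r s a + γ * ∑' t : ℕ, γ ^ t * expRew P π r (P s a) t

/-- Individual advantage function. -/
noncomputable def Aval {S A : Type*} [Fintype S] [Fintype A] [DecidableEq S]
    (γ : ℝ) (P : S → A → S → ℝ) (π : S → A → ℝ) (r : S → A → ℝ) (s : S) (a : A) : ℝ :=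
  Qval γ P π r s a - Vval γ P π r s

/-- Collective return: sum over agents of the expected individual discounted return. -/
noncomputable def eta {S A ι : Type*} [Fintype S] [Fintype A] [Fintype ι] [DecidableEq S]
    (γ : ℝ) (P : S → A → S → ℝ) (π : S → A → ℝ) (r : ι → S → A → ℝ) (d0 : S → ℝ) : ℝ :=
  ∑ i, ∑ s, d0 s * Vval γ P π (r i) s

/-- Discounted state visitation measure. -/
noncomputable def dvisit {S A : Type*} [Fintype S] [Fintype A]
    (γ : ℝ) (P : S → A → S → ℝ) (π : S → A → ℝ) (d0 : S → ℝ) (s : S) : ℝ :=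
  ∑' t : ℕ, γ ^ t * stateDist P π d0 t s

section aux
variable {S A : Type*} [Fintype S] [Fintype A]

lemma stateDist_nonneg (P : S → A → S → ℝ) (hP0 : ∀ s a s', 0 ≤ P s a s')
    (π : S → A → ℝ) (hπ0 : ∀ s a, 0 ≤ π s a) (d0 : S → ℝ) (hd0 : ∀ s, 0 ≤ d0 s) :
    ∀ t s, 0 ≤ stateDist P π d0 t s
  | 0, s => hd0 s
  | t+1, s' => by
    simp only [stateDist]
    refine Finset.sum_nonneg fun s _ => Finset.sum_nonneg fun a _ => ?_
    exact mul_nonneg (mul_nonneg (stateDist_nonneg P hP0 π hπ0 d0 hd0 t s) (hπ0 s a)) (hP0 s a s')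

lemma stateDist_mass (P : S → A → S → ℝ) (hP1 : ∀ s a, ∑ s', P s a s' = 1)
    (π : S → A → ℝ) (hπ1 : ∀ s, ∑ a, π s a = 1) (d0 : S → ℝ) :
    ∀ t, ∑ s, stateDist P π d0 t s = ∑ s, d0 s
  | 0 => rfl
  | t+1 => by
    simp only [stateDist]
    rw [Finset.sum_comm]
    calc ∑ s, ∑ s', ∑ a, stateDist P π d0 t s * π s a * P s a s'
        = ∑ s, stateDist P π d0 t s * ∑ a, π s a * ∑ s', P s a s' := by
          refine Finset.sum_congr rfl fun s _ => ?_
          rw [Finset.sum_comm]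
          simp [Finset.mul_sum, mul_assoc]
      _ = ∑ s, stateDist P π d0 t s := by simp [hP1, hπ1]
      _ = ∑ s, d0 s := stateDist_mass P hP1 π hπ1 d0 t

lemma stateDist_linear (P : S → A → S → ℝ) (π : S → A → ℝ) {κ : Type*} [Fintype κ]
    (c : κ → ℝ) (dj : κ → S → ℝ) :
    ∀ t s', stateDist P π (fun s => ∑ j, c j * dj j s) t s'
      = ∑ j, c j * stateDist P π (dj j) t s'
  | 0, s' => rfl
  | t+1, s' => by
    simp only [stateDist]
    rw [show (∑ s, ∑ a, stateDist P π (fun s => ∑ j, c j * dj j s) t s * π s a * P s a s')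
        = ∑ s, ∑ a, ∑ j, c j * (stateDist P π (dj j) t s * π s a * P s a s') from
      Finset.sum_congr rfl fun s _ => Finset.sum_congr rfl fun a _ => by
        rw [stateDist_linear P π c dj t s, Finset.sum_mul, Finset.sum_mul]
        exact Finset.sum_congr rfl fun j _ => by ring]
    rw [show (∑ s, ∑ a, ∑ j, c j * (stateDist P π (dj j) t s * π s a * P s a s'))
        = ∑ s, ∑ j, ∑ a, c j * (stateDist P π (dj j) t s * π s a * P s a s') from
      Finset.sum_congr rfl fun s _ => Finset.sum_comm, Finset.sum_comm]
    simp [Finset.mul_sum]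

lemma stateDist_delta [DecidableEq S] (P : S → A → S → ℝ) (π : S → A → ℝ) (d0 : S → ℝ)
    (t : ℕ) (s' : S) :
    stateDist P π d0 t s' = ∑ s0, d0 s0 * stateDist P π (fun x => if x = s0 then 1 else 0) t s' := by
  rw [← stateDist_linear P π d0 (fun s0 x => if x = s0 then 1 else 0) t s']
  congr 1
  ext s
  simp

lemma expRew_delta [DecidableEq S] (P : S → A → S → ℝ) (π : S → A → ℝ) (r : S → A → ℝ)
    (d0 : S → ℝ) (t : ℕ) :
    expRew P π r d0 t = ∑ s0, d0 s0 * expRew P π r (fun x => if x = s0 then 1 else 0) t := by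
  simp only [expRew]
  rw [show (∑ s, stateDist P π d0 t s * ∑ a, π s a * r s a)
      = ∑ s, ∑ s0, d0 s0 * (stateDist P π (fun x => if x = s0 then 1 else 0) t s * ∑ a, π s a * r s a)
    from Finset.sum_congr rfl fun s _ => by
      rw [stateDist_delta P π d0 t s, Finset.sum_mul]
      exact Finset.sum_congr rfl fun s0 _ => by ring]
  rw [Finset.sum_comm]
  simp [Finset.mul_sum]

end aux

section aux2
variable {S A : Type*} [Fintype S] [Fintype A]




lemma summable_expRew (γ : ℝ) (hγ0 : 0 ≤ γ) (hγ1 : γ < 1)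
    (P : S → A → S → ℝ) (hP0 : ∀ s a s', 0 ≤ P s a s') (hP1 : ∀ s a, ∑ s', P s a s' = 1)
    (π : S → A → ℝ) (hπ0 : ∀ s a, 0 ≤ π s a) (hπ1 : ∀ s, ∑ a, π s a = 1)
    (r : S → A → ℝ) (d0 : S → ℝ) (hd0 : ∀ s, 0 ≤ d0 s) :
    Summable (fun t => γ ^ t * expRew P π r d0 t) := by
  obtain ⟨C, hC⟩ := Finite.exists_le (fun s => |∑ a, π s a * r s a|)
  set D := max C 0 with hDdef
  have hD0 : (0:ℝ) ≤ D := le_max_right _ _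
  have hCD : ∀ s, |∑ a, π s a * r s a| ≤ D := fun s => (hC s).trans (le_max_left _ _)
  have hbound : ∀ t, |expRew P π r d0 t| ≤ (∑ s, d0 s) * D := by
    intro t
    calc |expRew P π r d0 t| ≤ ∑ s, |stateDist P π d0 t s * ∑ a, π s a * r s a| :=
          Finset.abs_sum_le_sum_abs _ _
      _ ≤ ∑ s, stateDist P π d0 t s * D := by
          refine Finset.sum_le_sum fun s _ => ?_
          rw [abs_mul, abs_of_nonneg (stateDist_nonneg P hP0 π hπ0 d0 hd0 t s)]
          exact mul_le_mul_of_nonneg_left (hCD s) (stateDist_nonneg P hP0 π hπ0 d0 hd0 t s)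
      _ = (∑ s, d0 s) * D := by rw [← Finset.sum_mul, stateDist_mass P hP1 π hπ1 d0 t]
  refine Summable.of_norm_bounded (((summable_geometric_of_lt_one hγ0 hγ1).mul_left
    ((∑ s, d0 s) * D))) fun t => ?_
  rw [Real.norm_eq_abs, abs_mul, abs_pow, abs_of_nonneg hγ0, mul_comm]
  exact mul_le_mul_of_nonneg_right (hbound t) (pow_nonneg hγ0 t)

lemma sum_d0_Vval [DecidableEq S] (γ : ℝ) (hγ0 : 0 ≤ γ) (hγ1 : γ < 1)
    (P : S → A → S → ℝ) (hP0 : ∀ s a s', 0 ≤ P s a s') (hP1 : ∀ s a, ∑ s', P s a s' = 1)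
    (π : S → A → ℝ) (hπ0 : ∀ s a, 0 ≤ π s a) (hπ1 : ∀ s, ∑ a, π s a = 1)
    (r : S → A → ℝ) (d0 : S → ℝ) :
    ∑ s, d0 s * Vval γ P π r s = ∑' t : ℕ, γ ^ t * expRew P π r d0 t := by
  have hδ : ∀ s0 : S, ∀ s, (0:ℝ) ≤ if s = s0 then 1 else 0 := by
    intro s0 s; split <;> norm_num
  have hsum : ∀ s0 : S, Summable (fun t => d0 s0 * (γ ^ t * expRew P π r (fun x => if x = s0 then 1 else 0) t)) := by
    intro s0
    exact (summable_expRew γ hγ0 hγ1 P hP0 hP1 π hπ0 hπ1 r _ (hδ s0)).mul_left _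
  calc ∑ s, d0 s * Vval γ P π r s
      = ∑ s0, ∑' t : ℕ, d0 s0 * (γ ^ t * expRew P π r (fun x => if x = s0 then 1 else 0) t) := by
        refine Finset.sum_congr rfl fun s0 _ => ?_
        rw [Vval, tsum_mul_left]
    _ = ∑' t : ℕ, ∑ s0, d0 s0 * (γ ^ t * expRew P π r (fun x => if x = s0 then 1 else 0) t) :=
        (Summable.tsum_finsetSum (fun s0 _ => hsum s0)).symm
    _ = ∑' t : ℕ, γ ^ t * expRew P π r d0 t := by
        refine tsum_congr fun t => ?_
        rw [expRew_delta P π r d0 t, Finset.mul_sum]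
        exact Finset.sum_congr rfl fun s0 _ => by ring

lemma tsum_telescope_neg {h : ℕ → ℝ} (hs : Summable h) :
    ∑' t : ℕ, (h (t+1) - h t) = - h 0 := by
  have h1 : Summable (fun t => h (t+1)) := (summable_nat_add_iff 1).2 hs
  rw [Summable.tsum_sub h1 hs, Summable.tsum_eq_zero_add hs]
  ring

end aux2

section aux3
variable {S A : Type*} [Fintype S] [Fintype A]

lemma Qval_eq [DecidableEq S] (γ : ℝ) (hγ0 : 0 ≤ γ) (hγ1 : γ < 1)
    (P : S → A → S → ℝ) (hP0 : ∀ s a s', 0 ≤ P s a s') (hP1 : ∀ s a, ∑ s', P s a s' = 1)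
    (π : S → A → ℝ) (hπ0 : ∀ s a, 0 ≤ π s a) (hπ1 : ∀ s, ∑ a, π s a = 1)
    (r : S → A → ℝ) (s : S) (a : A) :
    Qval γ P π r s a = r s a + γ * ∑ s', P s a s' * Vval γ P π r s' := by
  rw [Qval, sum_d0_Vval γ hγ0 hγ1 P hP0 hP1 π hπ0 hπ1 r (P s a)]

lemma key_step [DecidableEq S] (γ : ℝ) (P : S → A → S → ℝ) (πn : S → A → ℝ)
    (hπn1 : ∀ s, ∑ a, πn s a = 1) (rr : S → A → ℝ) (W : S → ℝ) (d0 : S → ℝ) (t : ℕ) :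
    ∑ s, stateDist P πn d0 t s * ∑ a, πn s a * (rr s a + γ * ∑ s', P s a s' * W s' - W s)
      = expRew P πn rr d0 t + γ * (∑ s', stateDist P πn d0 (t+1) s' * W s')
        - ∑ s, stateDist P πn d0 t s * W s := by
  have h2 : ∀ s a, πn s a * (γ * ∑ s', P s a s' * W s')
      = γ * ∑ s', πn s a * P s a s' * W s' := by
    intro s a
    rw [Finset.mul_sum, Finset.mul_sum, Finset.mul_sum]
    exact Finset.sum_congr rfl fun s' _ => by ring
  have inner : ∀ s, ∑ a, πn s a * (rr s a + γ * ∑ s', P s a s' * W s' - W s)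
      = (∑ a, πn s a * rr s a) + γ * (∑ a, ∑ s', πn s a * P s a s' * W s') - W s := by
    intro s
    rw [show (∑ a, πn s a * (rr s a + γ * ∑ s', P s a s' * W s' - W s))
        = ∑ a, (πn s a * rr s a + γ * (∑ s', πn s a * P s a s' * W s') - πn s a * W s) from
      Finset.sum_congr rfl fun a _ => by rw [mul_sub, mul_add, h2 s a]]
    rw [Finset.sum_sub_distrib, Finset.sum_add_distrib, ← Finset.mul_sum, ← Finset.sum_mul,
      hπn1 s, one_mul]
  have h3 : ∑ s', stateDist P πn d0 (t+1) s' * W s'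
      = ∑ s, stateDist P πn d0 t s * ∑ a, ∑ s', πn s a * P s a s' * W s' := by
    calc ∑ s', stateDist P πn d0 (t+1) s' * W s'
        = ∑ s', ∑ s, ∑ a, stateDist P πn d0 t s * πn s a * P s a s' * W s' := by
          refine Finset.sum_congr rfl fun s' _ => ?_
          simp only [stateDist]
          rw [Finset.sum_mul]
          exact Finset.sum_congr rfl fun s _ => by rw [Finset.sum_mul]
      _ = ∑ s, ∑ s', ∑ a, stateDist P πn d0 t s * πn s a * P s a s' * W s' := Finset.sum_comm
      _ = ∑ s, ∑ a, ∑ s', stateDist P πn d0 t s * πn s a * P s a s' * W s' :=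
          Finset.sum_congr rfl fun s _ => Finset.sum_comm
      _ = ∑ s, stateDist P πn d0 t s * ∑ a, ∑ s', πn s a * P s a s' * W s' := by
          refine Finset.sum_congr rfl fun s _ => ?_
          rw [Finset.mul_sum]
          refine Finset.sum_congr rfl fun a _ => ?_
          rw [Finset.mul_sum]
          exact Finset.sum_congr rfl fun s' _ => by ring
  rw [show (∑ s, stateDist P πn d0 t s * ∑ a, πn s a * (rr s a + γ * ∑ s', P s a s' * W s' - W s))
      = ∑ s, stateDist P πn d0 t s * ((∑ a, πn s a * rr s a)
          + γ * (∑ a, ∑ s', πn s a * P s a s' * W s') - W s) from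
    Finset.sum_congr rfl fun s _ => by rw [inner s]]
  simp only [mul_add, mul_sub, Finset.sum_add_distrib, Finset.sum_sub_distrib]
  rw [h3, Finset.mul_sum]
  rw [show (∑ s, stateDist P πn d0 t s * (γ * ∑ a, ∑ s', πn s a * P s a s' * W s'))
      = ∑ s, γ * (stateDist P πn d0 t s * ∑ a, ∑ s', πn s a * P s a s' * W s') from
    Finset.sum_congr rfl fun s _ => by ring]
  rfl


end aux3

/-- policy-difference lemma: for two joint policies `πold`, `πnew`,
`η(πnew) = η(πold) + E_{τ∼πnew}[∑ᵢ ∑ₜ γᵗ Aᵢ^{πold}(sₜ, aₜ)]`. -/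
theorem collective_return_difference
    {S A ι : Type*} [Fintype S] [Fintype A] [Fintype ι] [DecidableEq S]
    (γ : ℝ) (hγ0 : 0 ≤ γ) (hγ1 : γ < 1)
    (P : S → A → S → ℝ) (hP0 : ∀ s a s', 0 ≤ P s a s') (hP1 : ∀ s a, ∑ s', P s a s' = 1)
    (πold πnew : S → A → ℝ)
    (hπo0 : ∀ s a, 0 ≤ πold s a) (hπo1 : ∀ s, ∑ a, πold s a = 1)
    (hπn0 : ∀ s a, 0 ≤ πnew s a) (hπn1 : ∀ s, ∑ a, πnew s a = 1)
    (r : ι → S → A → ℝ)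
    (d0 : S → ℝ) (hd0 : ∀ s, 0 ≤ d0 s) (hd1 : ∑ s, d0 s = 1) :
    eta γ P πnew r d0 =
      eta γ P πold r d0 +
        ∑ i, ∑' t : ℕ, γ ^ t *
          ∑ s, stateDist P πnew d0 t s * ∑ a, πnew s a * Aval γ P πold (r i) s a := by
  have hΔ : ∀ i : ι,
      (∑' t : ℕ, γ ^ t * ∑ s, stateDist P πnew d0 t s * ∑ a, πnew s a * Aval γ P πold (r i) s a)
      = ∑ s, d0 s * Vval γ P πnew (r i) s - ∑ s, d0 s * Vval γ P πold (r i) s := by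
    intro i
    set W : S → ℝ := Vval γ P πold (r i) with hW
    set F : ℕ → ℝ := fun t => ∑ s, stateDist P πnew d0 t s * W s with hF
    have hA : ∀ s a, Aval γ P πold (r i) s a = r i s a + γ * ∑ s', P s a s' * W s' - W s := by
      intro s a
      rw [Aval, Qval_eq γ hγ0 hγ1 P hP0 hP1 πold hπo0 hπo1 (r i) s a, hW]
    have hFsum : Summable (fun t => γ ^ t * F t) := by
      have h := summable_expRew γ hγ0 hγ1 P hP0 hP1 πnew hπn0 hπn1 (fun s _ => W s) d0 hd0
      have heq : (fun t => γ ^ t * expRew P πnew (fun s _ => W s) d0 t)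
          = fun t => γ ^ t * F t := by
        funext t
        simp only [expRew, hF]
        congr 1
        refine Finset.sum_congr rfl fun s _ => ?_
        rw [← Finset.sum_mul, hπn1 s, one_mul]
      rwa [heq] at h
    have hterm : ∀ t, γ ^ t * ∑ s, stateDist P πnew d0 t s * ∑ a, πnew s a * Aval γ P πold (r i) s a
        = γ ^ t * expRew P πnew (r i) d0 t + (γ ^ (t+1) * F (t+1) - γ ^ t * F t) := by
      intro t
      rw [show (∑ s, stateDist P πnew d0 t s * ∑ a, πnew s a * Aval γ P πold (r i) s a)
          = ∑ s, stateDist P πnew d0 t s *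
              ∑ a, πnew s a * (r i s a + γ * ∑ s', P s a s' * W s' - W s) from
        Finset.sum_congr rfl fun s _ => by
          congr 1
          exact Finset.sum_congr rfl fun a _ => by rw [hA s a]]
      rw [key_step γ P πnew hπn1 (r i) W d0 t, hF]
      rw [pow_succ]
      ring
    have hS1 := summable_expRew γ hγ0 hγ1 P hP0 hP1 πnew hπn0 hπn1 (r i) d0 hd0
    have hS2 : Summable (fun t => γ ^ (t+1) * F (t+1) - γ ^ t * F t) :=
      ((summable_nat_add_iff 1).2 hFsum).sub hFsum
    have htel : ∑' t : ℕ, (γ ^ (t+1) * F (t+1) - γ ^ t * F t) = - (γ ^ 0 * F 0) :=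
      tsum_telescope_neg (h := fun t => γ ^ t * F t) hFsum
    rw [tsum_congr hterm, Summable.tsum_add hS1 hS2, htel,
      sum_d0_Vval γ hγ0 hγ1 P hP0 hP1 πnew hπn0 hπn1 (r i) d0]
    have hF0 : F 0 = ∑ s, d0 s * W s := by
      simp only [hF]
      exact Finset.sum_congr rfl fun s _ => rfl
    rw [hF0, pow_zero, one_mul, hW]
    ring
  simp only [eta, hΔ, Finset.sum_sub_distrib]
  ring
end

section
/- Let d^π' be a state distribution on a finite state set S, A_i^π'(s,a) real-valued functions bounded on S × A, and for each agent i let π̃^i and π be probability distributions over joint actions given each state. Then Σ_i E_{s∼d^π', a∼π̃^i(·|s)}[A_i^π'(s,a)] − Σ_i E_{s∼d^π', a∼π(·|s)}[A_i^π'(s,a)] ≤ f^π' + Σ_i (1/2) max_{s,a}|A_i^π'(s,a)| · Σ_{s,a}(π̃^i(a|s) − π(a|s))², where f^π' = Σ_i (1/2) max_{s,a}|A_i^π'(s,a)| · |A| · Σ_s (d^π'(s))². -/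
open scoped BigOperators

/-- Lemma 2: the discrepancy between the total expected advantages
under the suggesting joint policies `π̃ⁱ` and under the true joint policy `π` is
bounded by `f^{π'} + ∑ᵢ (1/2) maxₛₐ|Aᵢ^{π'}(s,a)| · ∑_{s,a}(π̃ⁱ(a|s) − π(a|s))²`,
where `f^{π'} = ∑ᵢ (1/2) maxₛₐ|Aᵢ^{π'}(s,a)| · |𝒜| · ‖d^{π'}‖₂²`. -/
theorem suggesting_policy_discrepancy_bound
    {S A ι : Type*} [Fintype S] [Fintype A] [Fintype ι] [Nonempty S] [Nonempty A]
    (d : S → ℝ) (hd0 : ∀ s, 0 ≤ d s) (hd1 : ∑ s, d s = 1)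
    (Adv : ι → S → A → ℝ)
    (πt : ι → S → A → ℝ)
    (hπt0 : ∀ i s a, 0 ≤ πt i s a) (hπt1 : ∀ i s, ∑ a, πt i s a = 1)
    (π : S → A → ℝ)
    (hπ0 : ∀ s a, 0 ≤ π s a) (hπ1 : ∀ s, ∑ a, π s a = 1) :
    (∑ i, ∑ s, d s * ∑ a, πt i s a * Adv i s a) -
      (∑ i, ∑ s, d s * ∑ a, π s a * Adv i s a) ≤
    (∑ i, (1 / 2) *
        Finset.univ.sup' Finset.univ_nonempty (fun sa : S × A => |Adv i sa.1 sa.2|) *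
        (Fintype.card A : ℝ) * ∑ s, (d s) ^ 2) +
    ∑ i, (1 / 2) *
        Finset.univ.sup' Finset.univ_nonempty (fun sa : S × A => |Adv i sa.1 sa.2|) *
        ∑ s, ∑ a, (πt i s a - π s a) ^ 2 := by
  set M : ι → ℝ := fun i =>
    Finset.univ.sup' Finset.univ_nonempty (fun sa : S × A => |Adv i sa.1 sa.2|) with hM
  have hMle : ∀ i s a, |Adv i s a| ≤ M i := fun i s a =>
    Finset.le_sup' (fun sa : S × A => |Adv i sa.1 sa.2|) (Finset.mem_univ (s, a))
  have hM0 : ∀ i, 0 ≤ M i := fun i =>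
    le_trans (abs_nonneg _) (hMle i (Classical.arbitrary S) (Classical.arbitrary A))
  have key : ∀ i s a, d s * (πt i s a - π s a) * Adv i s a ≤
      (1 / 2) * M i * ((d s) ^ 2 + (πt i s a - π s a) ^ 2) := by
    intro i s a
    have h1 : d s * (πt i s a - π s a) * Adv i s a ≤ d s * |πt i s a - π s a| * M i := by
      calc d s * (πt i s a - π s a) * Adv i s a ≤ |d s * (πt i s a - π s a) * Adv i s a| :=
            le_abs_self _
        _ = d s * |πt i s a - π s a| * |Adv i s a| := by
            rw [abs_mul, abs_mul, abs_of_nonneg (hd0 s)]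
        _ ≤ d s * |πt i s a - π s a| * M i := by
            apply mul_le_mul_of_nonneg_left (hMle i s a)
            exact mul_nonneg (hd0 s) (abs_nonneg _)
    have h2 : 2 * d s * |πt i s a - π s a| ≤ (d s) ^ 2 + |πt i s a - π s a| ^ 2 :=
      two_mul_le_add_sq _ _
    have h3 : d s * |πt i s a - π s a| ≤ (1 / 2) * ((d s) ^ 2 + (πt i s a - π s a) ^ 2) := by
      rw [sq_abs] at h2; linarith
    calc d s * (πt i s a - π s a) * Adv i s a ≤ d s * |πt i s a - π s a| * M i := h1
      _ ≤ (1 / 2) * ((d s) ^ 2 + (πt i s a - π s a) ^ 2) * M i :=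
          mul_le_mul_of_nonneg_right h3 (hM0 i)
      _ = (1 / 2) * M i * ((d s) ^ 2 + (πt i s a - π s a) ^ 2) := by ring
  have hL : (∑ i, ∑ s, d s * ∑ a, πt i s a * Adv i s a) -
      (∑ i, ∑ s, d s * ∑ a, π s a * Adv i s a) =
      ∑ i, ∑ s, ∑ a, d s * (πt i s a - π s a) * Adv i s a := by
    rw [← Finset.sum_sub_distrib]
    refine Finset.sum_congr rfl fun i _ => ?_
    rw [← Finset.sum_sub_distrib]
    refine Finset.sum_congr rfl fun s _ => ?_
    rw [← mul_sub, ← Finset.sum_sub_distrib, Finset.mul_sum]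
    refine Finset.sum_congr rfl fun a _ => ?_
    ring
  have hR : (∑ i, (1 / 2) * M i * (Fintype.card A : ℝ) * ∑ s, (d s) ^ 2) +
      (∑ i, (1 / 2) * M i * ∑ s, ∑ a, (πt i s a - π s a) ^ 2) =
      ∑ i, ∑ s, ∑ a, (1 / 2) * M i * ((d s) ^ 2 + (πt i s a - π s a) ^ 2) := by
    rw [← Finset.sum_add_distrib]
    refine Finset.sum_congr rfl fun i _ => ?_
    simp only [Finset.mul_sum, mul_add, ← Finset.sum_add_distrib]
    refine Finset.sum_congr rfl fun s _ => ?_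
    rw [Finset.sum_add_distrib]
    congr 1
    rw [Finset.sum_const, Finset.card_univ, nsmul_eq_mul]
    ring
  rw [hL, hR]
  exact Finset.sum_le_sum fun i _ => Finset.sum_le_sum fun s _ =>
    Finset.sum_le_sum fun a _ => key i s a
end
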